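/- Fix g ≥ 2. Let L₁ be the set of tuples (A₁,...,A_g, B₁,...,B_g) ∈ SU(2)^{2g} such that B₁ = -1, B_i = 1 for 2 ≤ i ≤ g-1, and A_g*B_g*A_g⁻¹*B_g⁻¹ = -1. Then the map from SU(2)^{g-1} to the quotient of L₁ by simultaneous SU(2)-conjugation, sending (A₁,...,A_{g-1}) to the conjugation class of the tuple with these first g-1 entries, A_g = A₀, B₁ = -1, B_i = 1 for 2 ≤ i ≤ g-1, and B_g = B₀, is a bijection. In particular the quotient of L₁ by simultaneous conjugation is in bijection with SU(2)^{g-1}. -/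

import Mathlib

open Matrix Complex

/-- `SU2` is the special unitary group of 2×2 complex matrices of determinant 1. -/
abbrev SU2 := Matrix.specialUnitaryGroup (Fin 2) ℂ

/-- The group structure on the special unitary group, with inverse given by
the conjugate transpose. -/
noncomputable instance instGroupSUC (n : ℕ) : Group (Matrix.specialUnitaryGroup (Fin n) ℂ) where
  inv A := ⟨star A.1, by
    obtain ⟨hu, hd⟩ := Matrix.mem_specialUnitaryGroup_iff.mp A.2
    refine Matrix.mem_specialUnitaryGroup_iff.mpr ⟨Unitary.star_mem hu, ?_⟩
    rw [Matrix.star_eq_conjTranspose, Matrix.det_conjTranspose, hd, star_one]⟩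
  inv_mul_cancel A :=
    Subtype.ext (Unitary.star_mul_self_of_mem (Matrix.mem_specialUnitaryGroup_iff.mp A.2).1)

/-- The element `-1` of `SU(2)`. -/
noncomputable def negOne : SU2 := ⟨-1, by
  refine Matrix.mem_specialUnitaryGroup_iff.mpr ⟨⟨?_, ?_⟩, ?_⟩ <;>
    simp [Matrix.det_neg]⟩

/-- The element `A₀ = diag(i, -i)` of `SU(2)`. -/
noncomputable def A₀ : SU2 := ⟨!![I, 0; 0, -I], by
  refine Matrix.mem_specialUnitaryGroup_iff.mpr ⟨⟨?_, ?_⟩, ?_⟩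
  · ext i j
    fin_cases i <;> fin_cases j <;>
      simp [Matrix.mul_apply, Fin.sum_univ_succ, Matrix.conjTranspose_apply]
  · ext i j
    fin_cases i <;> fin_cases j <;>
      simp [Matrix.mul_apply, Fin.sum_univ_succ, Matrix.conjTranspose_apply]
  · simp [Matrix.det_fin_two_of]⟩

/-- The element `B₀ = [[0,1],[-1,0]]` of `SU(2)`. -/
noncomputable def B₀ : SU2 := ⟨!![0, 1; -1, 0], by
  refine Matrix.mem_specialUnitaryGroup_iff.mpr ⟨⟨?_, ?_⟩, ?_⟩
  · ext i j
    fin_cases i <;> fin_cases j <;>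
      simp [Matrix.mul_apply, Fin.sum_univ_succ, Matrix.conjTranspose_apply]
  · ext i j
    fin_cases i <;> fin_cases j <;>
      simp [Matrix.mul_apply, Fin.sum_univ_succ, Matrix.conjTranspose_apply]
  · simp [Matrix.det_fin_two_of]⟩

@[simp] lemma coe_inv_SU2 (A : SU2) :
    ((A⁻¹ : SU2) : Matrix (Fin 2) (Fin 2) ℂ) = star (A : Matrix (Fin 2) (Fin 2) ℂ) := rfl

/-- The commutator of the standard pair `(A₀, B₀)` is `-1`. -/
lemma commutator_A₀_B₀ : A₀ * B₀ * A₀⁻¹ * B₀⁻¹ = negOne := by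
  apply Subtype.ext
  ext i j
  fin_cases i <;> fin_cases j <;>
    simp [A₀, B₀, negOne, Matrix.mul_apply, Matrix.vecMul, dotProduct,
      Fin.sum_univ_succ, Matrix.conjTranspose_apply]

/-- A tuple `(A₁,…,A_g,B₁,…,B_g)` of elements of `SU(2)`. -/
abbrev SU2Tuple (g : ℕ) := (Fin g → SU2) × (Fin g → SU2)

/-- Two tuples are related iff they are simultaneously conjugate by an element of `SU(2)`. -/
def ConjRel {g : ℕ} (p q : SU2Tuple g) : Prop :=
  ∃ u : SU2, (∀ i, u * p.1 i * u⁻¹ = q.1 i) ∧ (∀ i, u * p.2 i * u⁻¹ = q.2 i)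

/-- The last index `g` of a tuple `(A₁,…,A_g,B₁,…,B_g)`. -/
def lastIdx (g : ℕ) (hg : 2 ≤ g) : Fin g := ⟨g - 1, by omega⟩

/-- The Lagrangian `L₁ = L(H₁°, w₁)` of the paper (equation (1.10)): tuples with
`B₁ = -1`, `Bᵢ = 1` for `2 ≤ i ≤ g-1`, and `A_g B_g A_g⁻¹ B_g⁻¹ = -1`. -/
def L1set (g : ℕ) (hg : 2 ≤ g) : Set (SU2Tuple g) :=
  {p | p.2 ⟨0, by omega⟩ = negOne ∧
    (∀ i : Fin g, 1 ≤ (i : ℕ) → (i : ℕ) < g - 1 → p.2 i = 1) ∧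
    p.1 (lastIdx g hg) * p.2 (lastIdx g hg) *
      (p.1 (lastIdx g hg))⁻¹ * (p.2 (lastIdx g hg))⁻¹ = negOne}

/-- The standard representative in `L₁` with prescribed first `g-1` entries `A₁,…,A_{g-1}`,
with `A_g = A₀`, `B₁ = -1`, `Bᵢ = 1` for `2 ≤ i ≤ g-1` and `B_g = B₀`. -/
noncomputable def stdL1 (g : ℕ) (v : Fin (g - 1) → SU2) : SU2Tuple g :=
  (fun i => if h : (i : ℕ) < g - 1 then v ⟨i, h⟩ else A₀,
   fun i => if (i : ℕ) = 0 then negOne else if (i : ℕ) < g - 1 then 1 else B₀)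

lemma stdL1_mem (g : ℕ) (hg : 2 ≤ g) (v : Fin (g - 1) → SU2) : stdL1 g v ∈ L1set g hg := by
  refine ⟨?_, fun i h1 hi => ?_, ?_⟩
  · simp [stdL1]
  · have h0 : ¬ ((i : ℕ) = 0) := by omega
    simp [stdL1, if_neg h0, if_pos hi]
  · have h : ¬ ((g - 1 : ℕ) < g - 1) := lt_irrefl _
    have h0 : ¬ ((g - 1 : ℕ) = 0) := by omega
    simp only [stdL1, lastIdx, dif_neg h, if_neg h, if_neg h0]
    exact commutator_A₀_B₀

open ComplexConjugate

lemma mem_SU2_mk (a b : ℂ) (h : a * conj a + b * conj b = 1) :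
    !![a, b; -conj b, conj a] ∈ Matrix.specialUnitaryGroup (Fin 2) ℂ := by
  refine Matrix.mem_specialUnitaryGroup_iff.mpr ⟨⟨?_, ?_⟩, ?_⟩
  · ext i j
    fin_cases i <;> fin_cases j <;>
      simp [Matrix.mul_apply, Fin.sum_univ_succ, Matrix.conjTranspose_apply,
        Matrix.one_apply] <;> ring_nf <;>
      linear_combination h
  · ext i j
    fin_cases i <;> fin_cases j <;>
      simp [Matrix.mul_apply, Fin.sum_univ_succ, Matrix.conjTranspose_apply,
        Matrix.one_apply] <;> ring_nf <;>
      linear_combination h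
  · simp [Matrix.det_fin_two_of]; linear_combination h

lemma SU2_det (A : SU2) : (A.1).det = 1 :=
  (Matrix.mem_specialUnitaryGroup_iff.mp A.2).2

lemma SU2_star_eq_adjugate (A : SU2) : star A.1 = A.1.adjugate := by
  have h1 : star A.1 * A.1 = 1 :=
    Unitary.star_mul_self_of_mem (Matrix.mem_specialUnitaryGroup_iff.mp A.2).1
  have h2 : A.1 * A.1.adjugate = 1 := by
    rw [Matrix.mul_adjugate, SU2_det, one_smul]
  calc star A.1 = star A.1 * (A.1 * A.1.adjugate) := by rw [h2, mul_one]
    _ = (star A.1 * A.1) * A.1.adjugate := by rw [mul_assoc]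
    _ = A.1.adjugate := by rw [h1, one_mul]

lemma SU2_entry10 (A : SU2) : A.1 1 0 = -conj (A.1 0 1) := by
  have := congrFun (congrFun (SU2_star_eq_adjugate A) 1) 0
  simp [Matrix.adjugate_fin_two, Matrix.star_apply] at this
  rw [this]; ring
lemma SU2_entry11 (A : SU2) : A.1 1 1 = conj (A.1 0 0) := by
  have := congrFun (congrFun (SU2_star_eq_adjugate A) 0) 0
  simp [Matrix.adjugate_fin_two, Matrix.star_apply] at this
  rw [← this]
lemma SU2_norm (A : SU2) :
    A.1 0 0 * conj (A.1 0 0) + A.1 0 1 * conj (A.1 0 1) = 1 := by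
  have h := SU2_det A
  rw [Matrix.det_fin_two, SU2_entry10, SU2_entry11] at h
  linear_combination h

lemma SU2_mul_star (A : SU2) : A.1 * star A.1 = 1 :=
  Unitary.mul_star_self_of_mem (Matrix.mem_specialUnitaryGroup_iff.mp A.2).1

lemma conj_eq_of_mul_left {u A C : SU2} (h : u.1 * A.1 = C.1 * u.1) :
    u * A * u⁻¹ = C := by
  apply Subtype.ext
  show u.1 * A.1 * star u.1 = C.1
  rw [h, mul_assoc, SU2_mul_star, mul_one]

lemma SU2_eq_of_entries {A : SU2} {a b : ℂ} (h0 : A.1 0 0 = a) (h1 : A.1 0 1 = b) :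
    A.1 = !![a, b; -conj b, conj a] := by
  ext i j
  fin_cases i <;> fin_cases j <;>
    simp [← h0, ← h1, SU2_entry10 A, SU2_entry11 A]

lemma traceless_conj (A : SU2) (h : A.1 0 0 + A.1 1 1 = 0) :
    ∃ u : SU2, u * A * u⁻¹ = A₀ := by
  have h11 : A.1 1 1 = conj (A.1 0 0) := SU2_entry11 A
  rw [h11] at h
  have hre : (A.1 0 0).re = 0 := by
    have := congrArg Complex.re h
    simp at this
    linarith
  set t : ℝ := (A.1 0 0).im with htdef
  have hA00 : A.1 0 0 = (t:ℂ) * I := by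
    apply Complex.ext <;> simp [hre, htdef]
  set b : ℂ := A.1 0 1 with hbdef
  have hbb : b * conj b = 1 - (t:ℂ)^2 := by
    have hn := SU2_norm A
    rw [hA00, ← hbdef] at hn
    have hc : conj ((t:ℂ) * I) = -((t:ℂ)*I) := by simp [Complex.ext_iff]
    rw [hc] at hn
    linear_combination hn + (t:ℂ)^2 * Complex.I_sq
  have hns' : normSq b = 1 - t^2 := by
    have : (normSq b : ℂ) = ((1 - t^2 : ℝ) : ℂ) := by
      rw [← Complex.mul_conj]; push_cast; linear_combination hbb
    exact_mod_cast this
  have ht2 : t^2 ≤ 1 := by nlinarith [normSq_nonneg b]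
  have ht1 : t ≤ 1 := by nlinarith
  by_cases ht : t = 1
  · have hb0 : A.1 0 1 = 0 := by
      have : normSq b = 0 := by rw [hns', ht]; ring
      exact normSq_eq_zero.mp this
    refine ⟨1, ?_⟩
    have hA : A = A₀ := by
      apply Subtype.ext
      rw [SU2_eq_of_entries hA00 hb0]
      show _ = !![I, 0; 0, -I]
      rw [ht]
      norm_num [Complex.ext_iff]
    rw [hA]
    group
  · have htlt : t < 1 := lt_of_le_of_ne ht1 ht
    set n : ℝ := Real.sqrt (2 * (1 - t)) with hndef
    have hn0 : 0 < n := Real.sqrt_pos.mpr (by linarith)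
    have hn2 : (n:ℝ)^2 = 2 * (1 - t) := Real.sq_sqrt (by linarith)
    have hnC : (n:ℂ) ≠ 0 := by exact_mod_cast hn0.ne'
    have hn2C : (n:ℂ)^2 = 2 * (1 - (t:ℂ)) := by exact_mod_cast hn2
    set p : ℂ := conj b / n with hpdef
    set q : ℂ := -(I * (1 - (t:ℂ))) / n with hqdef
    have hcp : conj p = b / n := by
      rw [hpdef]; simp
    have hcq : conj q = (I * (1 - (t:ℂ))) / n := by
      rw [hqdef]; simp [map_div₀]
    have hmem : !![p, q; -conj q, conj p] ∈ Matrix.specialUnitaryGroup (Fin 2) ℂ := by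
      apply mem_SU2_mk
      rw [hcp, hcq, hpdef, hqdef]
      field_simp
      linear_combination (2-(n:ℂ)^2) * hbb + (-(1-(t:ℂ))^2 + (1-(t:ℂ)^2)*(1-(n:ℂ)^2)) * Complex.I_sq - hn2C + ((n:ℂ)^2-1)*hbb + ((n:ℂ)^2-1)*(1-(t:ℂ)^2)*Complex.I_sq
    refine ⟨⟨_, hmem⟩, conj_eq_of_mul_left ?_⟩
    have hAm : A.1 = !![(t:ℂ)*I, b; -conj b, conj ((t:ℂ)*I)] := SU2_eq_of_entries hA00 rfl
    show !![p, q; -conj q, conj p] * A.1 = !![I, 0; 0, -I] * !![p, q; -conj q, conj p]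
    rw [hAm, hcq, hpdef, hqdef]
    have hcb : conj ((t:ℂ) * I) = -((t:ℂ)*I) := by simp [Complex.ext_iff]
    rw [hcb]
    ext i j
    fin_cases i <;> fin_cases j
    · simp [Matrix.mul_apply, Fin.sum_univ_succ]
      field_simp
      ring
    · simp [Matrix.mul_apply, Fin.sum_univ_succ]
      field_simp
      linear_combination hbb + (1-(t:ℂ)^2) * Complex.I_sq
    · simp [Matrix.mul_apply, Fin.sum_univ_succ]
      field_simp
      linear_combination -hbb - (1-(t:ℂ)^2) * Complex.I_sq
    · simp [Matrix.mul_apply, Fin.sum_univ_succ]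
      field_simp
      ring

lemma SU2_star_mul (A : SU2) : star A.1 * A.1 = 1 :=
  Unitary.star_mul_self_of_mem (Matrix.mem_specialUnitaryGroup_iff.mp A.2).1

lemma conj_negOne (u : SU2) : u * negOne * u⁻¹ = negOne := by
  apply Subtype.ext
  show u.1 * negOne.1 * star u.1 = negOne.1
  show u.1 * (-1) * star u.1 = (-1 : Matrix (Fin 2) (Fin 2) ℂ)
  rw [mul_neg_one, neg_mul, SU2_mul_star]

lemma anticomm_of_comm {A B : SU2} (h : A * B * A⁻¹ * B⁻¹ = negOne) :
    A.1 * B.1 = -(B.1 * A.1) := by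
  have h2 : A * B = negOne * B * A := by rw [← h]; group
  have h3 := congrArg Subtype.val h2
  show _ = _
  calc A.1 * B.1 = (A * B).1 := rfl
    _ = (negOne * B * A).1 := h3
    _ = (-1) * B.1 * A.1 := rfl
    _ = -(B.1 * A.1) := by rw [neg_one_mul, neg_mul]

lemma trace_zero_of_anticomm {A B : SU2} (h : A.1 * B.1 = -(B.1 * A.1)) :
    A.1 0 0 + A.1 1 1 = 0 := by
  have key : A.1 = -(B.1 * A.1 * star B.1) := by
    calc A.1 = A.1 * (B.1 * star B.1) := by rw [SU2_mul_star, mul_one]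
      _ = (A.1 * B.1) * star B.1 := by rw [mul_assoc]
      _ = -(B.1 * A.1) * star B.1 := by rw [h]
      _ = -(B.1 * A.1 * star B.1) := by rw [neg_mul]
  have htr := congrArg Matrix.trace key
  rw [Matrix.trace_neg, Matrix.trace_mul_cycle, SU2_star_mul, one_mul] at htr
  have h2 : (2 : ℂ) • A.1.trace = 0 := by
    rw [two_smul]
    nth_rewrite 2 [htr]
    ring
  have h3 : A.1.trace = 0 := by
    have := smul_eq_zero.mp h2
    rcases this with h | h
    · norm_num at h
    · exact h
  rw [Matrix.trace_fin_two] at h3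
  exact h3

lemma anticomm_A₀_conj (B : SU2) (h : A₀.1 * B.1 = -(B.1 * A₀.1)) :
    ∃ u : SU2, u.1 * A₀.1 = A₀.1 * u.1 ∧ u * B * u⁻¹ = B₀ := by
  have hB00 : B.1 0 0 = 0 := by
    have h00 := congrFun (congrFun h 0) 0
    have hA : A₀.1 = !![I, 0; 0, -I] := rfl
    rw [hA] at h00
    simp [Matrix.mul_apply, Fin.sum_univ_succ] at h00
    linear_combination (-I/2) * h00 + (B.1 0 0) * Complex.I_sq
  have hβ : B.1 0 1 * conj (B.1 0 1) = 1 := by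
    have := SU2_norm B
    rw [hB00] at this
    linear_combination this
  set β := B.1 0 1 with hβdef
  have hβ0 : β ≠ 0 := by
    intro h0
    rw [h0] at hβ
    simp at hβ
  set μ : ℂ := Complex.exp (Complex.log (conj β) / 2) with hμdef
  have hμ2 : μ ^ 2 = conj β := by
    rw [hμdef, sq, ← Complex.exp_add, add_halves]
    exact Complex.exp_log (by simpa using hβ0)
  have hμμ : μ * conj μ = 1 := by
    have h1 : (normSq μ : ℂ) = μ * conj μ := (Complex.mul_conj μ).symm
    have h2 : ((normSq μ : ℂ))^2 = 1 := by
      rw [h1]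
      have : (μ * conj μ)^2 = μ^2 * conj (μ^2) := by
        rw [map_pow]; ring
      rw [this, hμ2]
      have : conj (conj β) = β := by simp
      rw [this]
      linear_combination hβ
    have h3 : (normSq μ)^2 = 1 := by exact_mod_cast h2
    have h4 : normSq μ = 1 := by nlinarith [normSq_nonneg μ]
    rw [← h1, h4]; norm_num
  have hmem : !![μ, (0:ℂ); -conj 0, conj μ] ∈ Matrix.specialUnitaryGroup (Fin 2) ℂ := by
    apply mem_SU2_mk
    simpa using hμμ
  refine ⟨⟨_, hmem⟩, ?_, conj_eq_of_mul_left ?_⟩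
  · show _ * A₀.1 = A₀.1 * _
    have hA : A₀.1 = !![I, 0; 0, -I] := rfl
    rw [hA]
    ext i j
    fin_cases i <;> fin_cases j <;>
      simp [Matrix.mul_apply, Fin.sum_univ_succ] <;> ring
  · have hBm : B.1 = !![(0:ℂ), β; -conj β, conj 0] := SU2_eq_of_entries hB00 rfl
    show _ * B.1 = B₀.1 * _
    have hB : B₀.1 = !![0, 1; -1, 0] := rfl
    rw [hBm, hB]
    ext i j
    fin_cases i <;> fin_cases j
    · simp [Matrix.mul_apply, Fin.sum_univ_succ]
    · simp [Matrix.mul_apply, Fin.sum_univ_succ]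
      linear_combination (β * conj μ) * hμ2 - (μ * β) * hμμ + (conj μ) * hβ
    · simp [Matrix.mul_apply, Fin.sum_univ_succ]
      have hμ2c : (conj μ)^2 = β := by
        have := congrArg conj hμ2
        simpa [map_pow] using this
      linear_combination (conj β * μ) * hμ2c - (conj μ * conj β) * hμμ + μ * hβ
    · simp [Matrix.mul_apply, Fin.sum_univ_succ]

lemma exists_conj (A B : SU2) (h : A * B * A⁻¹ * B⁻¹ = negOne) :
    ∃ u : SU2, u * A * u⁻¹ = A₀ ∧ u * B * u⁻¹ = B₀ := by
  have hac := anticomm_of_comm h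
  obtain ⟨u₁, hu₁⟩ := traceless_conj A (trace_zero_of_anticomm hac)
  have hac2 : A₀.1 * (u₁ * B * u₁⁻¹).1 = -((u₁ * B * u₁⁻¹).1 * A₀.1) := by
    rw [← hu₁]
    have e1 : (u₁*A*u₁⁻¹)*(u₁*B*u₁⁻¹) = u₁*(A*B)*u₁⁻¹ := by group
    have e2 : (u₁*B*u₁⁻¹)*(u₁*A*u₁⁻¹) = u₁*(B*A)*u₁⁻¹ := by group
    calc (u₁*A*u₁⁻¹).1 * (u₁*B*u₁⁻¹).1 = ((u₁*A*u₁⁻¹)*(u₁*B*u₁⁻¹)).1 := rfl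
      _ = (u₁*(A*B)*u₁⁻¹).1 := by rw [e1]
      _ = u₁.1 * (A.1*B.1) * star u₁.1 := rfl
      _ = u₁.1 * (-(B.1*A.1)) * star u₁.1 := by rw [hac]
      _ = -(u₁.1 * (B.1*A.1) * star u₁.1) := by rw [mul_neg, neg_mul]
      _ = -((u₁*(B*A)*u₁⁻¹).1) := rfl
      _ = -(((u₁*B*u₁⁻¹)*(u₁*A*u₁⁻¹)).1) := by rw [e2]
      _ = -((u₁*B*u₁⁻¹).1 * (u₁*A*u₁⁻¹).1) := rfl
  obtain ⟨u₂, hcomm, hu₂⟩ := anticomm_A₀_conj (u₁*B*u₁⁻¹) hac2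
  refine ⟨u₂*u₁, ?_, ?_⟩
  · have h1 : (u₂*u₁)*A*(u₂*u₁)⁻¹ = u₂*(u₁*A*u₁⁻¹)*u₂⁻¹ := by group
    rw [h1, hu₁]
    exact conj_eq_of_mul_left hcomm
  · have h1 : (u₂*u₁)*B*(u₂*u₁)⁻¹ = u₂*(u₁*B*u₁⁻¹)*u₂⁻¹ := by group
    rw [h1, hu₂]

lemma central_of_comm {u : SU2} (hA : u * A₀ * u⁻¹ = A₀) (hB : u * B₀ * u⁻¹ = B₀)
    (x : SU2) : u * x * u⁻¹ = x := by
  have h2A : u.1 * A₀.1 * star u.1 = A₀.1 := congrArg Subtype.val hA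
  have h2B : u.1 * B₀.1 * star u.1 = B₀.1 := congrArg Subtype.val hB
  have hA' : u.1 * A₀.1 = A₀.1 * u.1 := by
    calc u.1 * A₀.1 = u.1 * A₀.1 * (star u.1 * u.1) := by rw [SU2_star_mul, mul_one]
      _ = (u.1 * A₀.1 * star u.1) * u.1 := by rw [← mul_assoc]
      _ = A₀.1 * u.1 := by rw [h2A]
  have hB' : u.1 * B₀.1 = B₀.1 * u.1 := by
    calc u.1 * B₀.1 = u.1 * B₀.1 * (star u.1 * u.1) := by rw [SU2_star_mul, mul_one]
      _ = (u.1 * B₀.1 * star u.1) * u.1 := by rw [← mul_assoc]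
      _ = B₀.1 * u.1 := by rw [h2B]
  have hAm : A₀.1 = !![I, 0; 0, -I] := rfl
  have hBm : B₀.1 = !![0, 1; -1, 0] := rfl
  rw [hAm] at hA'
  rw [hBm] at hB'
  have hb0 : u.1 0 1 = 0 := by
    have h01 := congrFun (congrFun hA' 0) 1
    simp [Matrix.mul_apply, Fin.sum_univ_succ] at h01
    linear_combination (I/2) * h01 + (u.1 0 1) * Complex.I_sq
  have ha : conj (u.1 0 0) = u.1 0 0 := by
    have h01 := congrFun (congrFun hB' 0) 1
    simp [Matrix.mul_apply, Fin.sum_univ_succ, SU2_entry11 u] at h01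
    linear_combination -h01
  have ha2 : u.1 0 0 * u.1 0 0 = 1 := by
    have := SU2_norm u
    rw [hb0, ha] at this
    linear_combination this
  have hu : u.1 = (u.1 0 0) • (1 : Matrix (Fin 2) (Fin 2) ℂ) := by
    ext i j
    fin_cases i <;> fin_cases j <;>
      simp [SU2_entry10 u, SU2_entry11 u, hb0, ha, Matrix.one_apply]
  apply Subtype.ext
  show u.1 * x.1 * star u.1 = x.1
  have hstar : star u.1 = (u.1 0 0) • (1 : Matrix (Fin 2) (Fin 2) ℂ) := by
    ext i j
    fin_cases i <;> fin_cases j <;>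
      simp [Matrix.star_apply, SU2_entry10 u, SU2_entry11 u, hb0, ha, Matrix.one_apply]
  rw [hstar, hu]
  simp [smul_mul_assoc, mul_smul_comm, smul_smul, ha2]

lemma conjrel_equiv (g : ℕ) (hg : 2 ≤ g) :
    Equivalence (fun p q : L1set g hg => ConjRel p.1 q.1) := by
  constructor
  · intro p
    exact ⟨1, fun i => by group, fun i => by group⟩
  · rintro p q ⟨u, h1, h2⟩
    exact ⟨u⁻¹, fun i => by rw [← h1 i]; group, fun i => by rw [← h2 i]; group⟩
  · rintro p q r ⟨u, h1, h2⟩ ⟨w, h3, h4⟩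
    exact ⟨w*u, fun i => by rw [← h3 i, ← h1 i]; group,
      fun i => by rw [← h4 i, ← h2 i]; group⟩

set_option maxHeartbeats 1000000 in
/-- The map from `SU(2)^{g-1}` to the quotient of `L₁` by simultaneous conjugation,
sending `(A₁,…,A_{g-1})` to the class of the tuple with these first `g-1` entries,
`A_g = A₀`, `B₁ = -1`, `Bᵢ = 1` for `2 ≤ i ≤ g-1`, and `B_g = B₀`, is a bijection.
In particular the quotient of `L₁` by simultaneous conjugation is in bijection with
`SU(2)^{g-1}`. -/
theorem L1_quotient_bijective_SU2_pow (g : ℕ) (hg : 2 ≤ g) :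
    Function.Bijective
      (fun v : Fin (g - 1) → SU2 =>
        Quot.mk (fun p q : L1set g hg => ConjRel p.1 q.1)
          ⟨stdL1 g v, stdL1_mem g hg v⟩) := by
  constructor
  · intro v v' h
    have h0 := Quot.eq.mp h
    rw [(conjrel_equiv g hg).eqvGen_eq] at h0
    obtain ⟨u, h1, h2⟩ := h0
    have hnl : ¬ ((g - 1 : ℕ) < g - 1) := lt_irrefl _
    have hn0 : ¬ ((g - 1 : ℕ) = 0) := by omega
    have hA : u * A₀ * u⁻¹ = A₀ := by
      have := h1 (lastIdx g hg)
      simpa [stdL1, lastIdx, dif_neg hnl] using this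
    have hB : u * B₀ * u⁻¹ = B₀ := by
      have := h2 (lastIdx g hg)
      simpa [stdL1, lastIdx, if_neg hn0, if_neg hnl] using this
    have hc := central_of_comm hA hB
    funext j
    have hj : (j : ℕ) < g - 1 := j.2
    have := h1 ⟨j.1, by omega⟩
    simp only [stdL1, dif_pos hj] at this
    rw [hc] at this
    simpa using this
  · intro x
    obtain ⟨p, rfl⟩ := Quot.exists_rep x
    obtain ⟨hB1, hBmid, hcom⟩ := p.2
    obtain ⟨u, huA, huB⟩ := exists_conj _ _ hcom
    refine ⟨fun j => u * p.1.1 ⟨j.1, by omega⟩ * u⁻¹, ?_⟩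
    apply Quot.sound
    refine ⟨u⁻¹, fun i => ?_, fun i => ?_⟩
    · by_cases hi : (i : ℕ) < g - 1
      · simp only [stdL1, dif_pos hi]
        have hieq : (⟨(⟨(i : ℕ), by omega⟩ : Fin (g-1)) , by omega⟩ : Fin g) = i :=
          Fin.ext rfl
        show u⁻¹ * (u * p.1.1 _ * u⁻¹) * u⁻¹⁻¹ = p.1.1 i
        rw [show (⟨(i : ℕ), by omega⟩ : Fin g) = i from Fin.ext rfl]
        group
      · have hieq : i = lastIdx g hg := Fin.ext (by have := i.2; simp [lastIdx]; omega)
        simp only [stdL1, dif_neg hi]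
        rw [hieq, ← huA]
        group
    · by_cases hi0 : (i : ℕ) = 0
      · simp only [stdL1, if_pos hi0]
        rw [show i = (⟨0, by omega⟩ : Fin g) from Fin.ext hi0, hB1, conj_negOne]
      · by_cases hi : (i : ℕ) < g - 1
        · simp only [stdL1, if_neg hi0, if_pos hi]
          rw [hBmid i (by omega) hi]
          group
        · have hieq : i = lastIdx g hg := Fin.ext (by have := i.2; simp [lastIdx]; omega)
          simp only [stdL1, if_neg hi0, if_neg hi]
          rw [hieq, ← huB]
          group
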